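/- Let H be a symmetric invertible real n×n matrix and let β : ℝ → [0,1] be a continuous function with β(t) = 0 for t ≤ 0 and β(t) = 1 for t ≥ 1. Consider the linear ODE x'(t) = β(t)·H·x(t) for x : ℝ → ℝⁿ. The set of solutions that are bounded on ℝ is a linear subspace whose dimension equals the number of negative eigenvalues of H (counted with multiplicity). -/

import Mathlib

open Matrix

theorem ode_unique_global {E : Type*} [NormedAddCommGroup E] [NormedSpace ℝ E]
    {v : ℝ → E → E} {K : NNReal} (hv : ∀ t, LipschitzWith K (v t))
    {f g : ℝ → E} (hf : ∀ t, HasDerivAt f (v t (f t)) t)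
    (hg : ∀ t, HasDerivAt g (v t (g t)) t) (h0 : f 0 = g 0) : f = g := by
  have hv' : ∀ t, LipschitzOnWith K (v t) ((fun _ => (Set.univ : Set E)) t) :=
    fun t => (hv t).lipschitzOnWith
  funext t
  rcases le_total t 0 with h | h
  · exact ODE_solution_unique_of_mem_Icc_left (fun t _ => hv' t)
      (fun s _ => (hf s).continuousAt.continuousWithinAt)
      (fun s _ => (hf s).hasDerivWithinAt) (fun _ _ => trivial)
      (fun s _ => (hg s).continuousAt.continuousWithinAt)
      (fun s _ => (hg s).hasDerivWithinAt) (fun _ _ => trivial) h0 ⟨le_refl t, h⟩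
  · exact ODE_solution_unique_of_mem_Icc_right (fun t _ => hv' t)
      (fun s _ => (hf s).continuousAt.continuousWithinAt)
      (fun s _ => (hf s).hasDerivWithinAt) (fun _ _ => trivial)
      (fun s _ => (hg s).continuousAt.continuousWithinAt)
      (fun s _ => (hg s).hasDerivWithinAt) (fun _ _ => trivial) h0 ⟨h, le_refl t⟩

/-- The bounded solutions of `x' = β(t)·H·x`, where `β` is a cut-off and `H` is
symmetric invertible, form a subspace of dimension equal to the number of
negative eigenvalues of `H`. -/
theorem bounded_solutions_dimension (n : ℕ) (H : Matrix (Fin n) (Fin n) ℝ)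
    (hH : H.IsHermitian) (hinv : IsUnit H.det)
    (β : ℝ → ℝ) (hβc : Continuous β) (hβ01 : ∀ t, β t ∈ Set.Icc (0:ℝ) 1)
    (hβ0 : ∀ t ≤ (0:ℝ), β t = 0) (hβ1 : ∀ t ≥ (1:ℝ), β t = 1) :
    ∃ V : Submodule ℝ (ℝ → (Fin n → ℝ)),
      (V : Set (ℝ → (Fin n → ℝ))) =
        {x | (∀ t, HasDerivAt x (β t • H.mulVec (x t)) t) ∧ ∃ C, ∀ t, ‖x t‖ ≤ C} ∧
      Module.finrank ℝ V = (Finset.univ.filter fun i => hH.eigenvalues i < 0).card := by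
  set L := hH.eigenvalues with hLdef
  -- eigenbasis of `Fin n → ℝ`
  let b : Module.Basis (Fin n) ℝ (Fin n → ℝ) :=
    (hH.eigenvectorBasis.toBasis).map (WithLp.linearEquiv 2 ℝ (Fin n → ℝ))
  have hb : ∀ i, H.mulVec (b i) = L i • b i := by
    intro i
    simpa [b, Module.Basis.map_apply, OrthonormalBasis.coe_toBasis,
      WithLp.linearEquiv_apply] using hH.mulVec_eigenvectorBasis i
  have hLne : ∀ i, L i ≠ 0 := by
    intro i hi
    have hdet : H.det = ∏ j, L j := by simpa using hH.det_eq_prod_eigenvalues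
    have h0 : H.det = 0 := by
      rw [hdet]; exact Finset.prod_eq_zero (Finset.mem_univ i) hi
    exact hinv.ne_zero h0
  -- the integral of the cutoff
  set B : ℝ → ℝ := fun t => ∫ s in (0:ℝ)..t, β s with hBdef
  have hB : ∀ t, HasDerivAt B (β t) t := fun t =>
    intervalIntegral.integral_hasDerivAt_right (hβc.intervalIntegrable 0 t)
      (hβc.stronglyMeasurableAtFilter _ _) hβc.continuousAt
  have hBnn : ∀ t, 0 ≤ B t := by
    intro t
    rcases le_total 0 t with h | h
    · exact intervalIntegral.integral_nonneg h (fun u _ => (hβ01 u).1)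
    · have h1 : B t = ∫ s in (0:ℝ)..t, (0:ℝ) := by
        apply intervalIntegral.integral_congr
        intro s hs
        rw [Set.uIcc_of_ge h] at hs
        exact hβ0 s hs.2
      simp [h1]
  have hBgrow : ∀ s : ℝ, 0 ≤ s → s ≤ B (1 + s) := by
    intro s hs
    have h1 : ∫ u in (1:ℝ)..(1+s), β u = s := by
      have h0 : ∫ u in (1:ℝ)..(1+s), β u = ∫ _ in (1:ℝ)..(1+s), (1:ℝ) := by
        apply intervalIntegral.integral_congr
        intro u hu
        rw [Set.uIcc_of_le (by linarith)] at hu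
        exact hβ1 u hu.1
      simp [h0]
    have h2 : B 1 + ∫ u in (1:ℝ)..(1+s), β u = B (1+s) :=
      intervalIntegral.integral_add_adjacent_intervals
        (hβc.intervalIntegrable 0 1) (hβc.intervalIntegrable 1 (1+s))
    have h3 := hBnn 1
    rw [h1] at h2
    linarith
  -- the solution linear map
  let Sl : (Fin n → ℝ) →ₗ[ℝ] (ℝ → Fin n → ℝ) :=
    { toFun := fun x₀ t => ∑ i, (b.equivFun x₀ i * Real.exp (B t * L i)) • b i
      map_add' := by
        intro x y
        funext t
        simp [add_mul, add_smul, Finset.sum_add_distrib]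
      map_smul' := by
        intro c x
        funext t
        simp [Finset.smul_sum, smul_smul, mul_assoc] }
  have hSlapp : ∀ x₀ t, Sl x₀ t = ∑ i, (b.equivFun x₀ i * Real.exp (B t * L i)) • b i :=
    fun _ _ => rfl
  have hB0 : B 0 = 0 := intervalIntegral.integral_same
  have hSl0 : ∀ x₀, Sl x₀ 0 = x₀ := by
    intro x₀
    rw [hSlapp, hB0]
    simp [Module.Basis.sum_equivFun, Module.Basis.sum_repr]
  -- each `Sl x₀` is a solution of the ODE
  have hode : ∀ x₀ t, HasDerivAt (Sl x₀) (β t • H.mulVec (Sl x₀ t)) t := by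
    intro x₀ t
    have key : ∀ i ∈ Finset.univ, HasDerivAt
        (fun u => (b.equivFun x₀ i * Real.exp (B u * L i)) • b i)
        ((b.equivFun x₀ i * (Real.exp (B t * L i) * (β t * L i))) • b i) t := fun i _ =>
      ((((hB t).mul_const (L i)).exp).const_mul (b.equivFun x₀ i)).smul_const (b i)
    have hsum := HasDerivAt.fun_sum key
    have heq : β t • H.mulVec (Sl x₀ t) =
        ∑ i, (b.equivFun x₀ i * (Real.exp (B t * L i) * (β t * L i))) • b i := by
      rw [hSlapp, ← Matrix.mulVecLin_apply, map_sum, Finset.smul_sum]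
      refine Finset.sum_congr rfl fun i _ => ?_
      rw [LinearMap.map_smul, Matrix.mulVecLin_apply, hb i, smul_smul, smul_smul]
      congr 1
      ring
    rw [heq]
    exact hsum
  -- Lipschitz vector field
  let T : (Fin n → ℝ) →L[ℝ] (Fin n → ℝ) := LinearMap.toContinuousLinearMap (Matrix.mulVecLin H)
  have hvlip : ∀ t, LipschitzWith ‖T‖₊ (fun y : Fin n → ℝ => β t • H.mulVec y) := by
    intro t
    apply LipschitzWith.of_dist_le_mul
    intro a c
    rw [dist_eq_norm, dist_eq_norm, ← smul_sub]
    have h1 : H.mulVec a - H.mulVec c = T (a - c) := by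
      simp [T, Matrix.mulVec_sub]
    rw [h1, norm_smul, coe_nnnorm]
    calc ‖β t‖ * ‖T (a-c)‖ ≤ 1 * (‖T‖ * ‖a - c‖) := by
          refine mul_le_mul ?_ (T.le_opNorm _) (norm_nonneg _) zero_le_one
          rw [Real.norm_eq_abs, abs_of_nonneg (hβ01 t).1]; exact (hβ01 t).2
      _ = ‖T‖ * ‖a - c‖ := one_mul _
  -- uniqueness: any solution equals `Sl` of its initial value
  have huniq : ∀ x : ℝ → Fin n → ℝ,
      (∀ t, HasDerivAt x (β t • H.mulVec (x t)) t) → x = Sl (x 0) := by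
    intro x hx
    exact ode_unique_global hvlip hx (fun t => hode (x 0) t) (hSl0 (x 0)).symm
  -- the negative eigenspace
  classical
  let s : Set (Fin n) := {i | L i < 0}
  let W : Submodule ℝ (Fin n → ℝ) := Submodule.span ℝ (b '' s)
  have hmemW : ∀ x₀, x₀ ∈ W ↔ ∀ i, ¬ (L i < 0) → b.repr x₀ i = 0 := by
    intro x₀
    rw [show (x₀ ∈ W) = (x₀ ∈ Submodule.span ℝ (b '' s)) from rfl, Module.Basis.mem_span_image]
    constructor
    · intro h i hi
      by_contra hne
      exact hi (h (Finsupp.mem_support_iff.mpr hne))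
    · intro h i hi
      by_contra hns
      exact (Finsupp.mem_support_iff.mp hi) (h i hns)
  -- boundedness of solutions from `W`
  have hbound : ∀ x₀ ∈ W, ∀ t, ‖Sl x₀ t‖ ≤ ∑ i, |b.equivFun x₀ i| * ‖b i‖ := by
    intro x₀ hx₀ t
    rw [hSlapp]
    refine le_trans (norm_sum_le _ _) (Finset.sum_le_sum fun i _ => ?_)
    rw [norm_smul]
    refine mul_le_mul_of_nonneg_right ?_ (norm_nonneg _)
    rw [Real.norm_eq_abs, abs_mul, abs_of_nonneg (Real.exp_nonneg _)]
    rcases eq_or_ne (b.equivFun x₀ i) 0 with h | h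
    · simp [h]
    · have hLi : L i < 0 := by
        by_contra hc
        exact h (by rw [Module.Basis.equivFun_apply]; exact (hmemW x₀).1 hx₀ i hc)
      have hexp1 : Real.exp (B t * L i) ≤ 1 :=
        Real.exp_le_one_iff.mpr (mul_nonpos_of_nonneg_of_nonpos (hBnn t) hLi.le)
      exact mul_le_of_le_one_right (abs_nonneg _) hexp1
  -- bounded solutions have initial value in `W`
  let T2 : (Fin n → ℝ) →L[ℝ] (Fin n → ℝ) := LinearMap.toContinuousLinearMap b.equivFun.toLinearMap
  have hW : ∀ (x₀ : Fin n → ℝ) (C : ℝ), (∀ t, ‖Sl x₀ t‖ ≤ C) → x₀ ∈ W := by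
    intro x₀ C hC
    rw [hmemW]
    intro i hi
    by_contra hne
    have hci : b.equivFun x₀ i ≠ 0 := by rwa [Module.Basis.equivFun_apply]
    have hLi : 0 < L i := lt_of_le_of_ne (not_lt.mp hi) (Ne.symm (hLne i))
    set c := b.equivFun x₀ i with hc
    have hcoord : ∀ t, b.equivFun (Sl x₀ t) i = c * Real.exp (B t * L i) := by
      intro t
      rw [hSlapp, Module.Basis.equivFun_apply]
      have h5 := b.repr_sum_self (fun j => b.equivFun x₀ j * Real.exp (B t * L j))
      exact congrFun h5 i
    have hub : ∀ t, |c| * Real.exp (B t * L i) ≤ ‖T2‖ * C := by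
      intro t
      have h1 : |b.equivFun (Sl x₀ t) i| ≤ ‖b.equivFun (Sl x₀ t)‖ := by
        simpa using norm_le_pi_norm (b.equivFun (Sl x₀ t)) i
      have h2 : ‖T2 (Sl x₀ t)‖ ≤ ‖T2‖ * ‖Sl x₀ t‖ := T2.le_opNorm _
      have h3 : ‖T2‖ * ‖Sl x₀ t‖ ≤ ‖T2‖ * C := mul_le_mul_of_nonneg_left (hC t) (norm_nonneg _)
      have hT2 : T2 (Sl x₀ t) = b.equivFun (Sl x₀ t) := rfl
      calc |c| * Real.exp (B t * L i) = |c * Real.exp (B t * L i)| := by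
            rw [abs_mul, abs_of_nonneg (Real.exp_nonneg _)]
        _ = |b.equivFun (Sl x₀ t) i| := by rw [hcoord]
        _ ≤ ‖b.equivFun (Sl x₀ t)‖ := h1
        _ = ‖T2 (Sl x₀ t)‖ := by rw [hT2]
        _ ≤ ‖T2‖ * C := le_trans h2 h3
    set y := (‖T2‖ * C) / |c| with hy
    have hcpos : 0 < |c| := abs_pos.mpr hci
    set sx := max 0 (y / L i) with hsx
    have ht := hBgrow sx (le_max_left _ _)
    have hBL : y ≤ B (1+sx) * L i := by
      have h4 : y / L i ≤ sx := le_max_right _ _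
      have h6 := mul_le_mul_of_nonneg_right (le_trans h4 ht) hLi.le
      calc y = (y / L i) * L i := (div_mul_cancel₀ y hLi.ne').symm
        _ ≤ B (1+sx) * L i := h6
    have hexp : y + 1 ≤ Real.exp (B (1+sx) * L i) :=
      le_trans (Real.add_one_le_exp y) (Real.exp_le_exp.mpr hBL)
    have hfin := hub (1+sx)
    have h7 : |c| * (y+1) ≤ ‖T2‖ * C :=
      le_trans (mul_le_mul_of_nonneg_left hexp hcpos.le) hfin
    have hyc : |c| * y = ‖T2‖ * C := by
      rw [hy, mul_div_cancel₀ _ hcpos.ne']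
    nlinarith
  -- assemble
  refine ⟨W.map Sl, ?_, ?_⟩
  · ext x
    simp only [SetLike.mem_coe, Submodule.mem_map, Set.mem_setOf_eq]
    constructor
    · rintro ⟨x₀, hx₀, rfl⟩
      exact ⟨fun t => hode x₀ t, ⟨_, hbound x₀ hx₀⟩⟩
    · rintro ⟨hx, C, hC⟩
      have hxeq := huniq x hx
      refine ⟨x 0, hW (x 0) C fun t => ?_, hxeq.symm⟩
      rw [← hxeq]
      exact hC t
  · have hinj : Function.Injective Sl := by
      intro a c h
      have h8 := congrFun h 0
      rwa [hSl0 a, hSl0 c] at h8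
    have e := Submodule.equivMapOfInjective Sl hinj W
    rw [← e.finrank_eq]
    have hli : LinearIndependent ℝ (fun j : s => b (j : Fin n)) :=
      b.linearIndependent.comp _ Subtype.coe_injective
    have hsp : (Set.range fun j : s => b (j : Fin n)) = b '' s := by
      rw [show (fun j : s => b (j : Fin n)) = b ∘ ((↑) : s → Fin n) from rfl,
        Set.range_comp, Subtype.range_coe]
    have hrank : Module.finrank ℝ ↥W = Fintype.card ↥s := by
      rw [show W = Submodule.span ℝ (Set.range fun j : s => b (j : Fin n)) by rw [hsp]]
      exact finrank_span_eq_card hli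
    rw [hrank]
    rw [Fintype.card_congr (Equiv.subtypeEquivRight (fun i => Iff.rfl :
      ∀ i, i ∈ s ↔ L i < 0))]
    rw [Fintype.card_subtype]
    congr 1
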